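/- The Hadamard product of the series Σ_n ((6n)!/((3n)!(2n)!n!)) x^n and Σ_n 432^n (Σ_{k=0}^n (−1)^k C(−5/6,k) C(−1/6,n−k)^2) x^n is annihilated by the operator θ^4 − 144x(6θ+1)(6θ+5)(72θ^2+72θ+31) + 144·186624 x^2 (6θ+1)(6θ+5)(6θ+7)(6θ+11), given that the first factor solves θ^2 − 12x(6θ+1)(6θ+5) and the second solves θ^2 − 12x(72θ^2+72θ+31) + 186624x^2(θ+1)^2. -/

import Mathlib

open PowerSeries

/-- Multiplication by `x` on formal power series over ℚ. -/
noncomputable def Mx : Module.End ℚ (PowerSeries ℚ) :=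
  LinearMap.mulLeft ℚ (PowerSeries.X : PowerSeries ℚ)

/-- The Euler operator `θ = x·d/dx` on formal power series over ℚ. -/
noncomputable def Th : Module.End ℚ (PowerSeries ℚ) :=
  Mx ∘ₗ (PowerSeries.derivative ℚ).toLinearMap

/-- The Hadamard product `Σ A_n x^n * Σ B_n x^n = Σ A_n B_n x^n`. -/
noncomputable def hadamard (f g : PowerSeries ℚ) : PowerSeries ℚ :=
  PowerSeries.mk fun n => (PowerSeries.coeff n f) * (PowerSeries.coeff n g)

/-- The generalized binomial coefficient `C(α, k)`. -/
def gbinom (α : ℚ) (k : ℕ) : ℚ := (∏ i ∈ Finset.range k, (α - i)) / (Nat.factorial k)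

/-- The coefficients `(6n)!/((3n)!(2n)!n!)`. -/
def Acoef (n : ℕ) : ℚ :=
  (Nat.factorial (6 * n) : ℚ)
    / ((Nat.factorial (3 * n)) * (Nat.factorial (2 * n)) * (Nat.factorial n))

/-- The coefficients `432^n Σ_{k=0}^n (−1)^k C(−5/6,k) C(−1/6,n−k)²`. -/
def Bcoef (n : ℕ) : ℚ :=
  432 ^ n * ∑ k ∈ Finset.range (n + 1),
    (-1 : ℚ) ^ k * gbinom (-5/6) k * (gbinom (-1/6) (n - k)) ^ 2

lemma coeff_Th (f : PowerSeries ℚ) (n : ℕ) : coeff n (Th f) = n * coeff n f := by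
  cases n with
  | zero => simp [Th, Mx]
  | succ m =>
      simp [Th, Mx, coeff_succ_X_mul, coeff_derivative]
      ring

lemma end_ofNat5 (a : ℕ → ℚ) :
    ((5 : Module.End ℚ (PowerSeries ℚ))) (PowerSeries.mk a)
      = PowerSeries.mk (fun n => 5 * a n) := by
  ext n
  rw [Module.End.ofNat_apply, map_nsmul, coeff_mk]
  simp

lemma end_ofNat7 (a : ℕ → ℚ) :
    ((7 : Module.End ℚ (PowerSeries ℚ))) (PowerSeries.mk a)
      = PowerSeries.mk (fun n => 7 * a n) := by
  ext n
  rw [Module.End.ofNat_apply, map_nsmul, coeff_mk]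
  simp

lemma end_ofNat11 (a : ℕ → ℚ) :
    ((11 : Module.End ℚ (PowerSeries ℚ))) (PowerSeries.mk a)
      = PowerSeries.mk (fun n => 11 * a n) := by
  ext n
  rw [Module.End.ofNat_apply, map_nsmul, coeff_mk]
  simp

lemma end_ofNat31 (a : ℕ → ℚ) :
    ((31 : Module.End ℚ (PowerSeries ℚ))) (PowerSeries.mk a)
      = PowerSeries.mk (fun n => 31 * a n) := by
  ext n
  rw [Module.End.ofNat_apply, map_nsmul, coeff_mk]
  simp

lemma Th_mk (a : ℕ → ℚ) : Th (PowerSeries.mk a) = PowerSeries.mk (fun n => n * a n) := by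
  ext n; simp [coeff_Th]

lemma Mx_mk (a : ℕ → ℚ) :
    Mx (PowerSeries.mk a) = PowerSeries.mk (fun n => if n = 0 then 0 else a (n-1)) := by
  ext n
  cases n with
  | zero => simp [Mx]
  | succ m => simp [Mx, coeff_succ_X_mul]

lemma smul_mk (c : ℚ) (a : ℕ → ℚ) :
    c • (PowerSeries.mk a) = PowerSeries.mk (fun n => c * a n) := by
  ext n; simp

lemma F1_mk (a : ℕ → ℚ) :
    (((6:ℚ) • Th + 1) : Module.End ℚ (PowerSeries ℚ)) (PowerSeries.mk a)
      = PowerSeries.mk (fun n => (6*n+1) * a n) := by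
  rw [LinearMap.add_apply, LinearMap.smul_apply, Module.End.one_apply, Th_mk, smul_mk]
  ext n
  simp only [map_add, coeff_mk]
  ring

lemma F5_mk (a : ℕ → ℚ) :
    (((6:ℚ) • Th + 5) : Module.End ℚ (PowerSeries ℚ)) (PowerSeries.mk a)
      = PowerSeries.mk (fun n => (6*n+5) * a n) := by
  rw [LinearMap.add_apply, LinearMap.smul_apply, Th_mk, end_ofNat5, smul_mk]
  ext n
  simp only [map_add, coeff_mk]
  ring

lemma F7_mk (a : ℕ → ℚ) :
    (((6:ℚ) • Th + 7) : Module.End ℚ (PowerSeries ℚ)) (PowerSeries.mk a)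
      = PowerSeries.mk (fun n => (6*n+7) * a n) := by
  rw [LinearMap.add_apply, LinearMap.smul_apply, Th_mk, end_ofNat7, smul_mk]
  ext n
  simp only [map_add, coeff_mk]
  ring

lemma F11_mk (a : ℕ → ℚ) :
    (((6:ℚ) • Th + 11) : Module.End ℚ (PowerSeries ℚ)) (PowerSeries.mk a)
      = PowerSeries.mk (fun n => (6*n+11) * a n) := by
  rw [LinearMap.add_apply, LinearMap.smul_apply, Th_mk, end_ofNat11, smul_mk]
  ext n
  simp only [map_add, coeff_mk]
  ring

lemma Th2_mk (a : ℕ → ℚ) :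
    ((Th ^ 2 : Module.End ℚ (PowerSeries ℚ))) (PowerSeries.mk a)
      = PowerSeries.mk (fun n => (n:ℚ)^2 * a n) := by
  rw [pow_two, Module.End.mul_apply, Th_mk, Th_mk]
  ext n; simp; ring

lemma FP_mk (a : ℕ → ℚ) :
    (((72:ℚ) • Th ^ 2 + (72:ℚ) • Th + 31) : Module.End ℚ (PowerSeries ℚ)) (PowerSeries.mk a)
      = PowerSeries.mk (fun n => (72*n^2+72*n+31) * a n) := by
  rw [LinearMap.add_apply, LinearMap.add_apply, LinearMap.smul_apply, LinearMap.smul_apply,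
    Th2_mk, Th_mk, end_ofNat31, smul_mk, smul_mk]
  ext n
  simp only [map_add, coeff_mk]
  ring

lemma Th4_mk (a : ℕ → ℚ) :
    ((Th ^ 4 : Module.End ℚ (PowerSeries ℚ))) (PowerSeries.mk a)
      = PowerSeries.mk (fun n => (n:ℚ)^4 * a n) := by
  rw [show (4:ℕ) = 2 + 2 from rfl, pow_add, Module.End.mul_apply, Th2_mk, Th2_mk]
  ext n; simp; ring

lemma T1sq_mk (a : ℕ → ℚ) :
    (((Th + 1) ^ 2 : Module.End ℚ (PowerSeries ℚ))) (PowerSeries.mk a)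
      = PowerSeries.mk (fun n => ((n:ℚ)+1)^2 * a n) := by
  have h1 : ((Th + 1) : Module.End ℚ (PowerSeries ℚ)) (PowerSeries.mk a)
      = PowerSeries.mk (fun n => ((n:ℚ)+1) * a n) := by
    ext n; simp [coeff_Th]; ring
  have h2 : ((Th + 1) : Module.End ℚ (PowerSeries ℚ))
        (PowerSeries.mk (fun n => ((n:ℚ)+1) * a n))
      = PowerSeries.mk (fun n => ((n:ℚ)+1)^2 * a n) := by
    ext n; simp [coeff_Th]; ring
  rw [pow_two, Module.End.mul_apply, h1, h2]

lemma Mx2_mk (a : ℕ → ℚ) :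
    ((Mx ^ 2 : Module.End ℚ (PowerSeries ℚ))) (PowerSeries.mk a)
      = PowerSeries.mk (fun n => if n < 2 then 0 else a (n-2)) := by
  rw [pow_two, Module.End.mul_apply, Mx_mk, Mx_mk]
  ext n
  rcases n with _ | _ | m
  · simp
  · simp
  · rw [coeff_mk, coeff_mk, if_neg (by omega : ¬ m + 1 + 1 < 2)]
    simp

/-- The Hadamard product `(D)*(j)`: given that `Σ Acoef_n x^n` solves
`θ² − 12x(6θ+1)(6θ+5)` and `Σ Bcoef_n x^n` solves
`θ² − 12x(72θ²+72θ+31) + 186624x²(θ+1)²`, their Hadamard product is annihilated by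
`θ⁴ − 144x(6θ+1)(6θ+5)(72θ²+72θ+31) + 144·186624x²(6θ+1)(6θ+5)(6θ+7)(6θ+11)`. -/
theorem hadamard_D_j
    (hA : ((Th ^ 2
        - Mx * ((12 : ℚ) • (((6 : ℚ) • Th + 1) * ((6 : ℚ) • Th + 5))) :
      Module.End ℚ (PowerSeries ℚ)))
      (PowerSeries.mk Acoef) = 0)
    (hB : ((Th ^ 2
        - Mx * ((12 : ℚ) • ((72 : ℚ) • Th ^ 2 + (72 : ℚ) • Th + 31))
        + (186624 : ℚ) • (Mx ^ 2 * (Th + 1) ^ 2) :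
      Module.End ℚ (PowerSeries ℚ)))
      (PowerSeries.mk Bcoef) = 0) :
    ((Th ^ 4
        - (144 : ℚ) • (Mx * (((6 : ℚ) • Th + 1) * ((6 : ℚ) • Th + 5)
            * ((72 : ℚ) • Th ^ 2 + (72 : ℚ) • Th + 31)))
        + ((144 * 186624 : ℚ)) • (Mx ^ 2 * (((6 : ℚ) • Th + 1) * ((6 : ℚ) • Th + 5)
            * ((6 : ℚ) • Th + 7) * ((6 : ℚ) • Th + 11))) :
      Module.End ℚ (PowerSeries ℚ)))
      (hadamard (PowerSeries.mk Acoef) (PowerSeries.mk Bcoef)) = 0 := by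
  -- extract the recurrence for Acoef
  have hA' : ∀ n : ℕ, ((n:ℚ)+1)^2 * Acoef (n+1) = 12*(6*n+1)*(6*n+5) * Acoef n := by
    intro n
    have h := congrArg (coeff (n+1)) hA
    rw [LinearMap.sub_apply] at h
    simp only [Module.End.mul_apply, LinearMap.smul_apply, Th2_mk, F5_mk, F1_mk,
      smul_mk, Mx_mk, coeff_mk, map_sub, map_zero,
      Nat.succ_ne_zero, if_false, Nat.add_sub_cancel] at h
    push_cast at h ⊢
    linear_combination h
  -- extract the recurrence for Bcoef
  have hB' : ∀ n : ℕ, ((n:ℚ)+1)^2 * Bcoef (n+1)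
      = 12*(72*(n:ℚ)^2 + 72*(n:ℚ) + 31) * Bcoef n
        - 186624 * (if n = 0 then 0 else ((n:ℚ))^2 * Bcoef (n-1)) := by
    intro n
    have h := congrArg (coeff (n+1)) hB
    rw [LinearMap.add_apply, LinearMap.sub_apply] at h
    simp only [Module.End.mul_apply, LinearMap.smul_apply, Th2_mk, FP_mk, T1sq_mk,
      Mx2_mk, Mx_mk, smul_mk, coeff_mk, map_add, map_sub, map_zero,
      Nat.succ_ne_zero, if_false, Nat.add_sub_cancel] at h
    rcases n with _ | m
    · norm_num at h ⊢
      linear_combination h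
    · rw [if_neg (by omega : ¬ m + 1 + 1 < 2)] at h
      rw [if_neg (Nat.succ_ne_zero m)]
      rw [show m + 1 + 1 - 2 = m from by omega] at h
      rw [show m + 1 - 1 = m from by omega]
      push_cast at h ⊢
      linear_combination h
  -- now compute the goal coefficientwise
  have hH : hadamard (PowerSeries.mk Acoef) (PowerSeries.mk Bcoef)
      = PowerSeries.mk (fun n => Acoef n * Bcoef n) := by
    unfold hadamard; simp
  rw [hH, LinearMap.add_apply, LinearMap.sub_apply]
  simp only [Module.End.mul_apply, LinearMap.smul_apply]
  simp only [Th4_mk, FP_mk, F5_mk, F1_mk, F7_mk, F11_mk]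
  simp only [Mx2_mk, Mx_mk, smul_mk]
  ext m
  simp only [coeff_mk, map_add, map_sub, map_zero]
  rcases m with _ | _ | n
  · norm_num
  · have a0 := hA' 0
    have b0 := hB' 0
    norm_num at a0 b0 ⊢
    linear_combination (Bcoef 1) * a0 + (60 * Acoef 0) * b0
  · have a2 := hA' (n+1)
    have a1 := hA' n
    have b := hB' (n+1)
    rw [if_neg (Nat.succ_ne_zero n)] at b
    simp only [Nat.add_sub_cancel] at b
    rw [if_neg (Nat.succ_ne_zero (n+1)), if_neg (by omega : ¬ n + 2 < 2)]
    simp only [Nat.add_sub_cancel]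
    push_cast at a2 a1 b ⊢
    linear_combination (((n:ℚ)+2)^2 * Acoef (n+2)) * b
      + (12 * (72*((n:ℚ)+1)^2 + 72*((n:ℚ)+1) + 31) * Bcoef (n+1)
          - 186624 * ((n:ℚ)+1)^2 * Bcoef n) * a2
      - (2239488 * (6*(n:ℚ)+7) * (6*(n:ℚ)+11) * Bcoef n) * a1
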